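/- arXiv:1810.05140 — 4 statements merged into one kernel-verified Lean document; each statement's English description precedes it below -/
import Mathlib

section
/- Let c, d be nonzero integers, ε > 0, a a point of the circle group 𝕋 = ℝ/ℤ, and B an open arc of 𝕋 (or B = 𝕋) with diameter at least ε, such that |d|·ε > gcd(c,d). Then there exists x ∈ 𝕋 such that d·x = a and c·x ∈ B. -/
open Set AddCircle

lemma coe_lip : LipschitzWith 1 ((↑) : ℝ → AddCircle (1 : ℝ)) := by
  apply LipschitzWith.of_dist_le_mul
  intro x y
  rw [NNReal.coe_one, one_mul, dist_eq_norm, dist_eq_norm, ← AddCircle.coe_sub]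
  exact QuotientAddGroup.norm_mk_le_norm

lemma int_cast_zero' (k : ℤ) : ((k : ℝ) : AddCircle (1:ℝ)) = 0 := by
  rw [AddCircle.coe_eq_zero_iff]
  exact ⟨k, by simp⟩

lemma exists_int_mem (s q l u : ℝ) (hq : q ≠ 0) (h : |q| < u - l) :
    ∃ n : ℤ, s + n * q ∈ Set.Ioo l u := by
  have hq' : 0 < |q| := abs_pos.2 hq
  set n₀ : ℤ := ⌊(l - s) / |q|⌋ + 1 with hn₀
  have h1 : (l - s) / |q| < (n₀ : ℝ) := by
    have := Int.lt_floor_add_one ((l - s) / |q|)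
    rw [hn₀]; push_cast; linarith
  have h2 : (n₀ : ℝ) ≤ (l - s) / |q| + 1 := by
    have := Int.floor_le ((l - s) / |q|)
    rw [hn₀]; push_cast; linarith
  have h3 : ((l - s) / |q|) * |q| = l - s := div_mul_cancel₀ _ hq'.ne'
  have hlo : l < s + n₀ * |q| := by
    have := (div_lt_iff₀ hq').mp h1
    linarith
  have hhi : s + n₀ * |q| < u := by
    have h4 : (n₀ : ℝ) * |q| ≤ (l - s) + |q| := by
      have := mul_le_mul_of_nonneg_right h2 hq'.le
      rwa [add_mul, one_mul, h3] at this
    linarith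
  rcases abs_choice q with hc | hc
  · exact ⟨n₀, by rw [← hc]; exact ⟨hlo, hhi⟩⟩
  · refine ⟨-n₀, ?_⟩
    have : ((-n₀ : ℤ) : ℝ) * q = n₀ * |q| := by push_cast; rw [hc]; ring
    rw [this]; exact ⟨hlo, hhi⟩

/-- `B` is an open arc of the circle `ℝ/ℤ`: the image of a nonempty bounded open interval. -/
def IsOpenArc (B : Set (AddCircle (1 : ℝ))) : Prop :=
  ∃ l u : ℝ, l < u ∧ B = ((↑) : ℝ → AddCircle (1 : ℝ)) '' Set.Ioo l u

theorem stmt0 (c d : ℤ) (hc : c ≠ 0) (hd : d ≠ 0) (ε : ℝ) (hε : 0 < ε)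
    (a : AddCircle (1 : ℝ)) (B : Set (AddCircle (1 : ℝ)))
    (hB : B = Set.univ ∨ IsOpenArc B)
    (hdiam : ε ≤ Metric.diam B)
    (hgcd : (Int.gcd c d : ℝ) < (d.natAbs : ℝ) * ε) :
    ∃ x : AddCircle (1 : ℝ), d • x = a ∧ c • x ∈ B := by
  have hdR : (d : ℝ) ≠ 0 := Int.cast_ne_zero.2 hd
  obtain ⟨r, rfl⟩ := QuotientAddGroup.mk_surjective a
  have hsmul : ∀ (m : ℤ) (y : ℝ), m • ((y : AddCircle (1:ℝ))) = ↑((m:ℝ) * y) := by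
    intro m y
    rw [← AddCircle.coe_zsmul, zsmul_eq_mul]
  rcases hB with rfl | ⟨l, u, hlu, rfl⟩
  · refine ⟨↑(r / d), ?_, trivial⟩
    rw [hsmul, mul_div_cancel₀ _ hdR]
  · have hbd : Metric.diam (((↑) : ℝ → AddCircle (1:ℝ)) '' Set.Ioo l u) ≤ u - l := by
      calc Metric.diam (((↑) : ℝ → AddCircle (1:ℝ)) '' Set.Ioo l u)
          ≤ 1 * Metric.diam (Set.Ioo l u) := coe_lip.diam_image_le _ (Metric.isBounded_Ioo l u)
        _ = u - l := by rw [one_mul, Real.diam_Ioo hlu.le]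
    set g : ℤ := (Int.gcd c d : ℤ) with hg
    have hgpos : (0:ℝ) < g := by
      have : 0 < Int.gcd c d := Int.gcd_pos_of_ne_zero_left _ hc
      positivity
    set q : ℝ := (g : ℝ) / d with hqdef
    have hqne : q ≠ 0 := div_ne_zero (ne_of_gt hgpos) hdR
    have habsd : |(d:ℝ)| = (d.natAbs : ℝ) := by
      rw [← Int.cast_abs, Int.abs_eq_natAbs, Int.cast_natCast]
    have hqlt : |q| < u - l := by
      have h1 : |q| = (g:ℝ) / (d.natAbs : ℝ) := by
        rw [hqdef, abs_div, abs_of_pos hgpos, habsd]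
      have hdpos : (0:ℝ) < (d.natAbs : ℝ) := by
        have : 0 < d.natAbs := Int.natAbs_pos.2 hd
        positivity
      have hgR : (g:ℝ) = ((Int.gcd c d : ℕ) : ℝ) := by rw [hg]; push_cast; ring
      have h2 : (g:ℝ) / (d.natAbs : ℝ) < ε := (div_lt_iff₀ hdpos).2 (by rw [hgR]; linarith [hgcd])
      linarith [le_trans hdiam hbd, h2.trans_le (le_trans hdiam hbd)]
    obtain ⟨n, hn⟩ := exists_int_mem ((c:ℝ) * r / d) q l u hqne hqlt
    set A : ℤ := Int.gcdA c d
    set Bz : ℤ := Int.gcdB c d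
    have hbez : (g:ℝ) = c * A + d * Bz := by
      have := Int.gcd_eq_gcd_ab c d
      exact_mod_cast this
    refine ⟨↑((r + (n * A : ℤ)) / d), ?_, ?_⟩
    · rw [hsmul, mul_div_cancel₀ _ hdR, AddCircle.coe_add, int_cast_zero', add_zero]
    · rw [hsmul]
      have key : (c:ℝ) * ((r + (n * A : ℤ)) / d) =
          ((c:ℝ) * r / d + n * q) + ((-(n * Bz) : ℤ) : ℝ) := by
        rw [hqdef]
        field_simp
        push_cast
        linear_combination (-(n : ℝ)) * hbez
      rw [key, AddCircle.coe_add, int_cast_zero', add_zero]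
      exact ⟨_, hn, rfl⟩
end

section
/- Let ξ be irrational and ε > 0. Then there exists L > 0 such that for every interval I ⊆ ℝ of length greater than L, the set {(x + ℤ, ξx + ℤ) : x ∈ I} is ε-dense in 𝕋², i.e., every point of 𝕋² is within distance ε of some point of this set. -/
lemma aux_dense (ξ : ℝ) (hξ : Irrational ξ) :
    Dense ((AddSubgroup.closure ({1, ξ} : Set ℝ) : AddSubgroup ℝ) : Set ℝ) := by
  rcases AddSubgroup.dense_or_cyclic (AddSubgroup.closure ({1, ξ} : Set ℝ)) with h | ⟨a, ha⟩
  · exact h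
  · exfalso
    have h1 : (1 : ℝ) ∈ AddSubgroup.closure ({1, ξ} : Set ℝ) :=
      AddSubgroup.subset_closure (by simp)
    have h2 : ξ ∈ AddSubgroup.closure ({1, ξ} : Set ℝ) :=
      AddSubgroup.subset_closure (by simp)
    rw [ha, AddSubgroup.mem_closure_singleton] at h1 h2
    obtain ⟨m, hm⟩ := h1
    obtain ⟨n, hn⟩ := h2
    rw [zsmul_eq_mul] at hm hn
    have hm0 : (m : ℝ) ≠ 0 := by
      intro h
      rw [h, zero_mul] at hm
      exact one_ne_zero hm.symm
    apply hξ
    refine ⟨(n : ℚ) / (m : ℚ), ?_⟩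
    push_cast
    rw [div_eq_iff hm0, ← hn]
    have : a = 1 / (m : ℝ) := by field_simp [← hm]; linarith [mul_comm a (m : ℝ)]
    rw [this]
    field_simp

lemma aux_orbit (ξ : ℝ) (hξ : Irrational ξ) (δ : ℝ) (hδ : 0 < δ)
    (z : AddCircle (1 : ℝ)) : ∃ k : ℤ, dist z ((k * ξ : ℝ) : AddCircle (1 : ℝ)) < δ := by
  obtain ⟨t, rfl⟩ := QuotientAddGroup.mk_surjective z
  have hd := aux_dense ξ hξ
  have ht : t ∈ closure ((AddSubgroup.closure ({1, ξ} : Set ℝ) : AddSubgroup ℝ) : Set ℝ) := by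
    rw [hd.closure_eq]; trivial
  obtain ⟨s, hs, hst⟩ := Metric.mem_closure_iff.mp ht δ hδ
  obtain ⟨m, k, hmk⟩ := AddSubgroup.mem_closure_pair.mp hs
  rw [zsmul_eq_mul, zsmul_eq_mul, mul_one] at hmk
  refine ⟨k, ?_⟩
  have : (QuotientAddGroup.mk t : AddCircle (1 : ℝ)) - ((k * ξ : ℝ) : AddCircle (1 : ℝ))
      = ((t - k * ξ : ℝ) : AddCircle (1 : ℝ)) := by
    rfl
  rw [dist_eq_norm, this]
  have hnorm : ‖((t - k * ξ : ℝ) : AddCircle (1 : ℝ))‖ = |t - k * ξ - round (t - k * ξ)| := by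
    simpa using AddCircle.norm_eq (p := (1 : ℝ)) (x := t - k * ξ)
  rw [hnorm]
  calc |t - k * ξ - round (t - k * ξ)| ≤ |t - k * ξ - m| := round_le _ m
    _ = dist t s := by rw [Real.dist_eq, ← hmk]; ring_nf
    _ < δ := hst

theorem stmt2 (ξ : ℝ) (hξ : Irrational ξ) (ε : ℝ) (hε : 0 < ε) :
    ∃ L : ℝ, 0 < L ∧ ∀ a b : ℝ, L < b - a →
      ∀ p : AddCircle (1 : ℝ) × AddCircle (1 : ℝ),
        ∃ x ∈ Set.Ioo a b,
          dist p (((x : AddCircle (1 : ℝ))), ((ξ * x : ℝ) : AddCircle (1 : ℝ))) < ε := by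
  -- cover the circle by finitely many balls around multiples of ξ
  have hcov : (Set.univ : Set (AddCircle (1 : ℝ))) ⊆
      ⋃ k : ℤ, Metric.ball ((k * ξ : ℝ) : AddCircle (1 : ℝ)) ε := by
    intro z _
    obtain ⟨k, hk⟩ := aux_orbit ξ hξ ε hε z
    exact Set.mem_iUnion.mpr ⟨k, hk⟩
  obtain ⟨T, hT⟩ := isCompact_univ.elim_finite_subcover
    (fun k : ℤ => Metric.ball ((k * ξ : ℝ) : AddCircle (1 : ℝ)) ε)
    (fun k => Metric.isOpen_ball) hcov
  set N : ℕ := T.sup Int.natAbs with hN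
  have hNk : ∀ k ∈ T, (|k| : ℤ) ≤ (N : ℤ) := by
    intro k hk
    rw [Int.abs_eq_natAbs]
    exact_mod_cast Finset.le_sup (f := Int.natAbs) hk
  refine ⟨2 * (N : ℝ) + 4, by positivity, ?_⟩
  intro a b hab p
  set c : ℝ := (a + b) / 2 with hc
  -- lift p.1 to a real number near c
  obtain ⟨y, hy⟩ := QuotientAddGroup.mk_surjective p.1
  set y' : ℝ := y + ⌈c - y⌉ with hy'
  have hy'1 : c ≤ y' := by
    have := Int.le_ceil (c - y)
    simp only [hy']; linarith
  have hy'2 : y' < c + 1 := by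
    have := Int.ceil_lt_add_one (c - y)
    simp only [hy']; linarith
  have hy'p : ((y' : ℝ) : AddCircle (1 : ℝ)) = p.1 := by
    rw [← hy]
    rw [QuotientAddGroup.eq_iff_sub_mem]
    refine AddSubgroup.mem_zmultiples_iff.mpr ⟨⌈c - y⌉, ?_⟩
    simp [hy']
  -- find the shift k
  obtain ⟨k, hkT, hk⟩ := Set.mem_iUnion₂.mp
    (hT (Set.mem_univ (p.2 - ((ξ * y' : ℝ) : AddCircle (1 : ℝ)))))
  rw [Metric.mem_ball] at hk
  refine ⟨y' + k, ⟨?_, ?_⟩, ?_⟩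
  · -- a < y' + k
    have h1 : |(k : ℝ)| ≤ (N : ℝ) := by exact_mod_cast hNk k hkT
    have h2 : -(N : ℝ) ≤ (k : ℝ) := by
      have := neg_abs_le (k : ℝ); linarith
    have hca : c - a = (b - a) / 2 := by rw [hc]; ring
    have : (N : ℝ) + 2 < c - a := by rw [hca]; linarith
    linarith
  · -- y' + k < b
    have h1 : |(k : ℝ)| ≤ (N : ℝ) := by exact_mod_cast hNk k hkT
    have h2 : (k : ℝ) ≤ (N : ℝ) := by
      have := le_abs_self (k : ℝ); linarith
    have hcb : b - c = (b - a) / 2 := by rw [hc]; ring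
    have : (N : ℝ) + 2 < b - c := by rw [hcb]; linarith
    linarith
  · rw [Prod.dist_eq]
    refine max_lt ?_ ?_
    · -- first coordinate distance is zero
      have : ((y' + k : ℝ) : AddCircle (1 : ℝ)) = p.1 := by
        rw [← hy'p, QuotientAddGroup.eq_iff_sub_mem]
        refine AddSubgroup.mem_zmultiples_iff.mpr ⟨k, ?_⟩
        simp
      rw [this]
      simpa using hε
    · -- second coordinate
      have hsplit : ((ξ * (y' + k) : ℝ) : AddCircle (1 : ℝ))
          = ((ξ * y' : ℝ) : AddCircle (1 : ℝ)) + ((k * ξ : ℝ) : AddCircle (1 : ℝ)) := by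
        have : ξ * (y' + k) = ξ * y' + k * ξ := by ring
        rw [this]
        rfl
      rw [hsplit, dist_eq_norm]
      have : p.2 - (((ξ * y' : ℝ) : AddCircle (1 : ℝ)) + ((k * ξ : ℝ) : AddCircle (1 : ℝ)))
          = (p.2 - ((ξ * y' : ℝ) : AddCircle (1 : ℝ))) - ((k * ξ : ℝ) : AddCircle (1 : ℝ)) := by
        abel
      rw [this, ← dist_eq_norm]
      exact hk
end

section
/- Every infinite subset of an abelian group G of exponent n contains a subset of the form T + z, where z ∈ G and T is a d-round subset of G for some divisor d of n. -/
/-- `S` is a `d`-round subset of the abelian group `G`. -/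
def IsRound {G : Type*} [AddCommGroup G] (d : ℕ) (S : Set G) : Prop :=
  1 < d ∧ S.Countable ∧ S.Infinite ∧ (∀ x ∈ S, d • x = 0) ∧
    ∀ e : ℕ, e ∣ d → e ≠ d → ∀ y : G, {x ∈ S | e • x = y}.Finite

theorem stmt6 {G : Type*} [AddCommGroup G] (n : ℕ) (hn : 0 < n)
    (hexp : ∀ x : G, n • x = 0)
    (hmin : ∀ m : ℕ, 0 < m → (∀ x : G, m • x = 0) → n ≤ m)
    (S : Set G) (hS : S.Infinite) :
    ∃ (T : Set G) (z : G) (d : ℕ), d ∣ n ∧ IsRound d T ∧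
      (fun t => t + z) '' T ⊆ S := by
  classical
  set Q : ℕ → Prop := fun d => 0 < d ∧ ∃ (z : G) (T : Set G), T.Countable ∧ T.Infinite ∧
    (∀ x ∈ T, d • x = 0) ∧ (fun t => t + z) '' T ⊆ S with hQdef
  have hQn : Q n := by
    refine ⟨hn, 0, ?_⟩
    let f := hS.natEmbedding
    refine ⟨Set.range (fun k => (f k : G)), Set.countable_range _,
      Set.infinite_range_of_injective (fun a b hab => f.injective (Subtype.ext hab)), ?_, ?_⟩
    · intro x _; exact hexp x
    · rintro _ ⟨t, ⟨k, rfl⟩, rfl⟩; simpa using (f k).2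
  have hex : ∃ d, Q d := ⟨n, hQn⟩
  set d := Nat.find hex with hd
  obtain ⟨hdpos, z, T, hTc, hTi, hT0, hTS⟩ : Q d := Nat.find_spec hex
  -- d divides n
  have hgcd : Q (Nat.gcd d n) := by
    refine ⟨Nat.gcd_pos_of_pos_right _ hn, z, T, hTc, hTi, ?_, hTS⟩
    intro x hx
    have h1 : addOrderOf x ∣ d := addOrderOf_dvd_iff_nsmul_eq_zero.2 (hT0 x hx)
    have h2 : addOrderOf x ∣ n := addOrderOf_dvd_iff_nsmul_eq_zero.2 (hexp x)
    exact addOrderOf_dvd_iff_nsmul_eq_zero.1 (Nat.dvd_gcd h1 h2)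
  have hle : d ≤ Nat.gcd d n := Nat.find_le hgcd
  have hge : Nat.gcd d n ≤ d := Nat.le_of_dvd hdpos (Nat.gcd_dvd_left _ _)
  have hdn : d ∣ n := by
    have : Nat.gcd d n = d := le_antisymm hge hle
    rw [← this]; exact Nat.gcd_dvd_right _ _
  -- 1 < d
  have hd1 : 1 < d := by
    rcases Nat.lt_or_ge 1 d with h | h
    · exact h
    · exfalso
      have hd1' : d = 1 := le_antisymm h hdpos
      have : T ⊆ {0} := by
        intro x hx
        have := hT0 x hx
        rw [hd1', one_nsmul] at this
        simpa using this
      exact hTi ((Set.finite_singleton (0 : G)).subset this)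
  refine ⟨T, z, d, hdn, ⟨hd1, hTc, hTi, hT0, ?_⟩, hTS⟩
  intro e he hed y
  by_contra hfin
  have hF : {x ∈ T | e • x = y}.Infinite := hfin
  obtain ⟨x0, hx0⟩ := hF.nonempty
  have hepos : 0 < e := by
    rcases Nat.eq_zero_or_pos e with rfl | h
    · exact absurd (Nat.eq_zero_of_zero_dvd he).symm hed
    · exact h
  have helt : e < d := lt_of_le_of_ne (Nat.le_of_dvd hdpos he) hed
  have hQe : Q e := by
    refine ⟨hepos, x0 + z, (fun x => x - x0) '' {x ∈ T | e • x = y}, ?_, ?_, ?_, ?_⟩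
    · exact ((hTc.mono (Set.sep_subset _ _)).image _)
    · exact hF.image (Set.injOn_of_injective (fun a b hab => by
        simpa using sub_left_injective hab))
    · rintro _ ⟨x, ⟨hxT, hxy⟩, rfl⟩
      rw [smul_sub, hxy, hx0.2, sub_self]
    · rintro _ ⟨_, ⟨x, ⟨hxT, _⟩, rfl⟩, rfl⟩
      show x - x0 + (x0 + z) ∈ S
      have hz : x - x0 + (x0 + z) = x + z := by abel
      rw [hz]
      exact hTS ⟨x, hxT, rfl⟩
  exact Nat.find_min hex helt hQe
end

section
/- Let 𝕋 = ℝ/ℤ and let (A_n)_{n∈F} be a finite family of open arcs of 𝕋 centered at 0, with integers a_n, such that Σ_{n∈F} |a_n|·δ(A_n) > 1. Then Σ_{n∈F} a_n·A_n = 𝕋, i.e., every element of 𝕋 can be written as Σ_{n∈F} a_n·x_n with x_n ∈ A_n for each n. -/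
theorem stmt8 (F : Finset ℕ) (A : ℕ → Set (AddCircle (1 : ℝ))) (a : ℕ → ℤ)
    (harc : ∀ n ∈ F, ∃ r : ℝ, 0 < r ∧
      A n = ((↑) : ℝ → AddCircle (1 : ℝ)) '' Set.Ioo (-r) r)
    (hsum : 1 < ∑ n ∈ F, ((a n).natAbs : ℝ) * Metric.diam (A n)) :
    ∀ t : AddCircle (1 : ℝ), ∃ x : ℕ → AddCircle (1 : ℝ),
      (∀ n ∈ F, x n ∈ A n) ∧ ∑ n ∈ F, a n • x n = t := by
  classical
  choose! r hr hA using harc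
  set c : ℕ → ℝ := fun n => |(a n : ℝ)| * min (r n) (1/4) with hc
  set R : ℝ := ∑ n ∈ F, c n with hRdef
  have hnorm : ∀ z : ℝ, ‖(z : AddCircle (1:ℝ))‖ ≤ |z| := by
    intro z
    rw [AddCircle.norm_eq]
    simpa using round_le z 0
  have hdiam : ∀ n ∈ F, Metric.diam (A n) ≤ 2 * min (r n) (1/4) := by
    intro n hn
    have hrn := hr n hn
    apply Metric.diam_le_of_forall_dist_le (by positivity)
    intro x hx y hy
    rw [hA n hn] at hx hy
    obtain ⟨u, hu, rfl⟩ := hx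
    obtain ⟨v, hv, rfl⟩ := hy
    have h1 : dist ((u:AddCircle (1:ℝ))) v = ‖((u - v : ℝ) : AddCircle (1:ℝ))‖ := by
      rw [dist_eq_norm, AddCircle.coe_sub]
    rw [h1]
    have hb2 : ‖((u - v : ℝ) : AddCircle (1:ℝ))‖ ≤ |u - v| := hnorm _
    have hb3 : ‖((u - v : ℝ) : AddCircle (1:ℝ))‖ ≤ 1/2 := by
      have := AddCircle.norm_le_half_period (1:ℝ) (x := ((u - v : ℝ) : AddCircle (1:ℝ))) one_ne_zero
      simpa using this
    obtain ⟨hu1, hu2⟩ := hu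
    obtain ⟨hv1, hv2⟩ := hv
    have h4 : |u - v| ≤ 2 * r n := by
      rw [abs_le]; constructor <;> linarith
    rcases le_total (r n) (1/4) with h | h
    · simp only [min_eq_left h]; linarith
    · simp only [min_eq_right h]; linarith
  have hR : 1/2 < R := by
    have : ∑ n ∈ F, ((a n).natAbs : ℝ) * Metric.diam (A n) ≤ 2 * R := by
      rw [hRdef, Finset.mul_sum]
      apply Finset.sum_le_sum
      intro n hn
      have h1 : ((a n).natAbs : ℝ) = |(a n : ℝ)| := by
        rw [Nat.cast_natAbs, Int.cast_abs]
      rw [h1, hc]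
      have := hdiam n hn
      have habs : (0:ℝ) ≤ |(a n : ℝ)| := abs_nonneg _
      calc |(a n : ℝ)| * Metric.diam (A n) ≤ |(a n : ℝ)| * (2 * min (r n) (1/4)) :=
            mul_le_mul_of_nonneg_left this habs
        _ = 2 * (|(a n : ℝ)| * min (r n) (1/4)) := by ring
    linarith
  have hRpos : 0 < R := by linarith
  intro t
  obtain ⟨t₀, rfl⟩ := QuotientAddGroup.mk_surjective t
  set s : ℝ := t₀ - round t₀ with hs
  have hsabs : |s| ≤ 1/2 := abs_sub_round t₀
  have hst : ((s : ℝ) : AddCircle (1:ℝ)) = QuotientAddGroup.mk t₀ := by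
    rw [QuotientAddGroup.eq]
    refine ⟨round t₀, ?_⟩
    simp [hs]
  set y : ℕ → ℝ := fun n =>
    if a n = 0 then 0 else min (r n) (1/4) * s / R * (|(a n : ℝ)| / (a n : ℝ)) with hy
  refine ⟨fun n => ((y n : ℝ) : AddCircle (1:ℝ)), ?_, ?_⟩
  · intro n hn
    rw [hA n hn]
    refine ⟨y n, ?_, rfl⟩
    have hrn := hr n hn
    by_cases h : a n = 0
    · simp [hy, h]
      linarith
    · have hm : (0:ℝ) < min (r n) (1/4) := lt_min hrn (by norm_num)
      have hca : ((a n : ℝ)) ≠ 0 := Int.cast_ne_zero.mpr h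
      have habs1 : |(|(a n : ℝ)| / (a n : ℝ))| = 1 := by
        rw [abs_div, abs_abs, div_self (abs_ne_zero.mpr hca)]
      have hyabs : |y n| = min (r n) (1/4) * |s| / R := by
        rw [hy]
        simp only [if_neg h]
        rw [abs_mul, habs1, mul_one, abs_div, abs_mul, abs_of_pos hm, abs_of_pos hRpos]
      have hlt' : |y n| < min (r n) (1/4) := by
        rw [hyabs, div_lt_iff₀ hRpos]
        nlinarith [abs_nonneg s]
      have hlt : |y n| < r n := lt_of_lt_of_le hlt' (min_le_left _ _)
      rw [abs_lt] at hlt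
      exact ⟨hlt.1, hlt.2⟩
  · have key : ∀ n ∈ F, (a n • ((y n : ℝ) : AddCircle (1:ℝ))) = ((c n * s / R : ℝ) : AddCircle (1:ℝ)) := by
      intro n hn
      have h1 : a n • ((y n : ℝ) : AddCircle (1:ℝ)) = (((a n : ℝ) * y n : ℝ) : AddCircle (1:ℝ)) := by
        rw [← AddCircle.coe_zsmul]
        norm_num [zsmul_eq_mul]
      rw [h1]
      congr 1
      by_cases h : a n = 0
      · simp [hy, h, hc]
      · have hca : ((a n : ℝ)) ≠ 0 := Int.cast_ne_zero.mpr h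
        rw [hy]
        simp only [if_neg h]
        field_simp [hc]
        ring
    rw [Finset.sum_congr rfl key, ← hst]
    have h2 : ∑ n ∈ F, ((c n * s / R : ℝ) : AddCircle (1:ℝ)) = ((∑ n ∈ F, c n * s / R : ℝ) : AddCircle (1:ℝ)) :=
      (map_sum (QuotientAddGroup.mk' (AddSubgroup.zmultiples (1:ℝ))) (fun n => c n * s / R) F).symm
    rw [h2]
    congr 1
    rw [← Finset.sum_div, ← Finset.sum_mul, ← hRdef, mul_comm, mul_div_assoc,
      div_self hRpos.ne', mul_one]
end
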